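/- Let l be a positive integer, n a nonzero integer, λ a nonnegative integer, 0 ≤ j ≤ |n|−1 and 1 ≤ u ≤ 2l−1. Then, for the Weil–Brezin transform associated to the lattice N_{2l} = ℤ × 2lℤ × ℤ: if n > 0, (W_n^{j,u}F_{n,λ}) ∘ φ = e^{πi(n+λ)} · W_n^{j',2l−u}F_{n,λ} where 0 ≤ j' ≤ n−1 is the representative of −j−1 mod n; and if n < 0, (W_n^{j,u}F_{n,λ}) ∘ φ = e^{πi(n+λ)} · W_n^{j'',2l−u}F_{n,λ} where 0 ≤ j'' ≤ |n|−1 is the representative of −j+1 mod |n|. -/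

import Mathlib

noncomputable section

abbrev H3 := ℝ × ℝ × ℝ

/-- the map φ(p,q,s) = (−p, −q, s + 1/2) -/
def phi : H3 → H3 := fun x => (-x.1, -x.2.1, x.2.2 + 1 / 2)

/-- Weil–Brezin transform associated to the lattice N_l -/
def WB (l : ℕ) (n j u : ℤ) (g : ℝ → ℂ) : H3 → ℂ := fun x =>
  Complex.exp (2 * Real.pi * Complex.I * (n : ℂ) * (x.2.2 : ℂ)) *
    ∑' k : ℤ,
      g (x.1 + (k : ℝ) + (j : ℝ) / |(n : ℝ)| + (u : ℝ) / ((l : ℝ) * (n : ℝ))) *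
        Complex.exp (2 * Real.pi * Complex.I * (n : ℂ) *
          ((((k : ℝ) + (j : ℝ) / |(n : ℝ)| + (u : ℝ) / ((l : ℝ) * (n : ℝ))) : ℝ) : ℂ) *
          (x.2.1 : ℂ))

/-- physicists' Hermite polynomials: H₀ = 1, H_{λ+1} = 2X·H_λ − H_λ' -/
def physHermite : ℕ → Polynomial ℝ
  | 0 => 1
  | (lam + 1) => 2 * Polynomial.X * physHermite lam - (physHermite lam).derivative

/-- F_{n,λ}(x) = H_λ(√(2π|n|) x) e^{−π|n|x²} -/
def Fnl (n : ℤ) (lam : ℕ) : ℝ → ℂ := fun x =>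
  (((physHermite lam).eval (Real.sqrt (2 * Real.pi * |(n : ℝ)|) * x) *
    Real.exp (-Real.pi * |(n : ℝ)| * x ^ 2) : ℝ) : ℂ)

open Polynomial in
lemma physHermite_comp_neg (lam : ℕ) :
    (physHermite lam).comp (-X) = (-1) ^ lam * physHermite lam := by
  induction lam with
  | zero => simp [physHermite]
  | succ m ih =>
    have hC : ((-1 : Polynomial ℝ) ^ m) = C ((-1 : ℝ) ^ m) := by
      simp [map_pow]
    have hder : (derivative (physHermite m)).comp (-X)
        = (-1) ^ (m + 1) * derivative (physHermite m) := by
      have h := congrArg derivative ih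
      rw [derivative_comp, hC, derivative_C_mul] at h
      simp only [derivative_neg, derivative_X] at h
      rw [← hC] at h
      have h2 : (derivative (physHermite m)).comp (-X)
          = -((-1) ^ m * derivative (physHermite m)) := by
        have := congrArg (fun p => -p) h
        simpa using this
      rw [h2]; ring
    rw [show physHermite (m + 1) = 2 * X * physHermite m - derivative (physHermite m) from rfl]
    rw [sub_comp, mul_comp, mul_comp, X_comp, ih, hder]
    have : (2 : Polynomial ℝ).comp (-X) = 2 := by simp
    rw [this]
    ring

open Polynomial in
lemma physHermite_eval_neg (lam : ℕ) (y : ℝ) :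
    (physHermite lam).eval (-y) = (-1) ^ lam * (physHermite lam).eval y := by
  have h := congrArg (eval y) (physHermite_comp_neg lam)
  simpa [eval_comp] using h

lemma Fnl_neg (n : ℤ) (lam : ℕ) (x : ℝ) :
    Fnl n lam (-x) = (-1 : ℂ) ^ lam * Fnl n lam x := by
  unfold Fnl
  rw [mul_neg, physHermite_eval_neg, neg_sq]
  push_cast
  ring

lemma neg_one_pow_eq_exp (lam : ℕ) :
    ((-1 : ℂ)) ^ lam = Complex.exp (Real.pi * Complex.I * (lam : ℂ)) := by
  rw [show ((Real.pi : ℂ) * Complex.I * (lam : ℂ)) = (lam : ℕ) * ((Real.pi : ℂ) * Complex.I) by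
    push_cast; ring]
  rw [Complex.exp_nat_mul, Complex.exp_pi_mul_I]

lemma key (L : ℕ) (n : ℤ) (lam : ℕ) (j u j' u' m : ℤ)
    (hA : ((j' : ℝ) / |(n : ℝ)| + (u' : ℝ) / ((L : ℝ) * (n : ℝ)))
        + ((j : ℝ) / |(n : ℝ)| + (u : ℝ) / ((L : ℝ) * (n : ℝ))) = (m : ℝ))
    (x : H3) :
    WB L n j u (Fnl n lam) (phi x) =
      Complex.exp (Real.pi * Complex.I * ((n : ℂ) + (lam : ℂ))) *
        WB L n j' u' (Fnl n lam) x := by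
  obtain ⟨p, q, s⟩ := x
  simp only [WB, phi]
  rw [← mul_assoc]
  rw [← tsum_mul_left, ← tsum_mul_left]
  conv_rhs => rw [← Equiv.tsum_eq ((Equiv.addRight m).trans (Equiv.neg ℤ))]
  refine tsum_congr fun k => ?_
  simp only [Equiv.trans_apply, Equiv.coe_addRight, Equiv.neg_apply]
  have h1 : -p + (k : ℝ) + (j : ℝ) / |(n : ℝ)| + (u : ℝ) / ((L : ℝ) * (n : ℝ))
      = -(p + ((-(k + m) : ℤ) : ℝ) + (j' : ℝ) / |(n : ℝ)| + (u' : ℝ) / ((L : ℝ) * (n : ℝ))) := by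
    push_cast
    linarith
  have h2 : ((-(k + m) : ℤ) : ℝ) + (j' : ℝ) / |(n : ℝ)| + (u' : ℝ) / ((L : ℝ) * (n : ℝ))
      = -((k : ℝ) + (j : ℝ) / |(n : ℝ)| + (u : ℝ) / ((L : ℝ) * (n : ℝ))) := by
    push_cast
    linarith
  rw [h1, Fnl_neg, h2, neg_one_pow_eq_exp]
  simp only [Complex.ofReal_neg]
  set c : ℂ := (((k : ℝ) + (j : ℝ) / |(n : ℝ)| + (u : ℝ) / ((L : ℝ) * (n : ℝ)) : ℝ) : ℂ) with hc
  set F : ℂ := Fnl n lam (p + ((-(k + m) : ℤ) : ℝ) + (j' : ℝ) / |(n : ℝ)| + (u' : ℝ) / ((L : ℝ) * (n : ℝ))) with hF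
  calc Complex.exp (2 * Real.pi * Complex.I * (n : ℂ) * ((s + 1/2 : ℝ) : ℂ)) *
        (Complex.exp (Real.pi * Complex.I * (lam : ℂ)) * F *
          Complex.exp (2 * Real.pi * Complex.I * (n : ℂ) * c * (-(q : ℂ))))
      = F * Complex.exp (2 * Real.pi * Complex.I * (n : ℂ) * ((s + 1/2 : ℝ) : ℂ)
          + Real.pi * Complex.I * (lam : ℂ)
          + 2 * Real.pi * Complex.I * (n : ℂ) * c * (-(q : ℂ))) := by
        rw [Complex.exp_add, Complex.exp_add]; ring
    _ = F * Complex.exp (Real.pi * Complex.I * ((n : ℂ) + (lam : ℂ))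
          + 2 * Real.pi * Complex.I * (n : ℂ) * ((s : ℝ) : ℂ)
          + 2 * Real.pi * Complex.I * (n : ℂ) * (-c) * ((q : ℝ) : ℂ)) := by
        congr 1
        push_cast
        ring
    _ = Complex.exp (Real.pi * Complex.I * ((n : ℂ) + (lam : ℂ))) *
          Complex.exp (2 * Real.pi * Complex.I * (n : ℂ) * ((s : ℝ) : ℂ)) *
          (F * Complex.exp (2 * Real.pi * Complex.I * (n : ℂ) * (-c) * ((q : ℝ) : ℂ))) := by
        rw [Complex.exp_add, Complex.exp_add]; ring

/-- behaviour of the u ≠ 0 Weil–Brezin eigenfunctions (for the lattice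
N_{2l}) under pullback by φ. -/
theorem WB_comp_phi_u_ne_zero (l : ℕ) (hl : 0 < l) (n : ℤ) (hn : n ≠ 0) (lam : ℕ)
    (j u : ℤ) (hj0 : 0 ≤ j) (hj1 : j ≤ |n| - 1) (hu0 : 1 ≤ u) (hu1 : u ≤ 2 * (l : ℤ) - 1) :
    (0 < n →
      ∀ x : H3, WB (2 * l) n j u (Fnl n lam) (phi x) =
        Complex.exp (Real.pi * Complex.I * ((n : ℂ) + (lam : ℂ))) *
          WB (2 * l) n ((-j - 1) % n) (2 * (l : ℤ) - u) (Fnl n lam) x) ∧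
    (n < 0 →
      ∀ x : H3, WB (2 * l) n j u (Fnl n lam) (phi x) =
        Complex.exp (Real.pi * Complex.I * ((n : ℂ) + (lam : ℂ))) *
          WB (2 * l) n ((-j + 1) % |n|) (2 * (l : ℤ) - u) (Fnl n lam) x) := by
  have hl' : ((l : ℝ)) ≠ 0 := Nat.cast_ne_zero.mpr hl.ne'
  have hn' : ((n : ℝ)) ≠ 0 := Int.cast_ne_zero.mpr hn
  constructor
  · intro hpos x
    have habs : |n| = n := abs_of_pos hpos
    have habsR : |(n : ℝ)| = (n : ℝ) := abs_of_pos (by exact_mod_cast hpos)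
    have hj1' : j ≤ n - 1 := by rwa [habs] at hj1
    have hjmod : (-j - 1) % n = n - j - 1 := by
      have h1 : (-j - 1 + n * 1) % n = (-j - 1) % n := Int.add_mul_emod_self_left ..
      have h2 : (-j - 1 + n * 1) % n = -j - 1 + n * 1 :=
        Int.emod_eq_of_lt (by omega) (by omega)
      rw [h1.symm.trans h2]
      ring
    have hA : (((((-j - 1) % n : ℤ) : ℝ)) / |(n : ℝ)|
          + (((2 * (l : ℤ) - u : ℤ) : ℝ)) / (((2 * l : ℕ) : ℝ) * (n : ℝ)))
        + ((j : ℝ) / |(n : ℝ)| + (u : ℝ) / (((2 * l : ℕ) : ℝ) * (n : ℝ))) = ((1 : ℤ) : ℝ) := by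
      rw [hjmod, habsR]
      push_cast
      field_simp
      ring
    exact key (2 * l) n lam j u _ _ 1 hA x
  · intro hneg x
    have habsR : |(n : ℝ)| = -(n : ℝ) := abs_of_neg (by exact_mod_cast hneg)
    have hmod : ((-j + 1) % |n| : ℤ) = (-j + 1) - |n| * ((-j + 1) / |n|) := Int.emod_def _ _
    have hA : (((((-j + 1) % |n| : ℤ) : ℝ)) / |(n : ℝ)|
          + (((2 * (l : ℤ) - u : ℤ) : ℝ)) / (((2 * l : ℕ) : ℝ) * (n : ℝ)))
        + ((j : ℝ) / |(n : ℝ)| + (u : ℝ) / (((2 * l : ℕ) : ℝ) * (n : ℝ)))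
        = ((-((-j + 1) / |n|) : ℤ) : ℝ) := by
      rw [hmod]
      push_cast [habsR]
      have hinv : (n : ℝ) * ((n : ℝ))⁻¹ = 1 := mul_inv_cancel₀ hn'
      field_simp
      ring_nf
    exact key (2 * l) n lam j u _ _ _ hA x


end
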